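/- Let (R, V) be a LEARS with reflectable subspace V′ and associated data Δ, S_α, and G as in the standard setup. Then the subgroup ⟨R⟩ generated by R is the internal direct sum of ⟨Δ⟩ and G: every element of ⟨R⟩ is uniquely the sum of an element of ⟨Δ⟩ and an element of G. In particular, ⟨R⟩ ∩ V⁰ = G. -/

import Mathlib

open Submodule

/-- The reflection `σ_α(x) = x - ⟨x,α⟩α` where `⟨x,α⟩ = 2(x,α)/(α,α)`. -/
def rroot {V : Type*} [AddCommGroup V] [Module ℚ V]
    (B : LinearMap.BilinForm ℚ V) (α x : V) : V :=
  x - (2 * B x α / B α α) • α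

/-- A locally extended affine root system (axioms (A1)–(A4)). -/
def IsLEARS {V : Type*} [AddCommGroup V] [Module ℚ V]
    (B : LinearMap.BilinForm ℚ V) (R : Set V) : Prop :=
  (∀ α ∈ R, B α α ≠ 0) ∧
  Submodule.span ℚ R = ⊤ ∧
  (∀ α ∈ R, ∀ β ∈ R, ∃ n : ℤ, 2 * B α β / B β β = (n : ℚ)) ∧
  (∀ α ∈ R, ∀ β ∈ R, rroot B α β ∈ R) ∧
  (∀ R₁ R₂ : Set V, R = R₁ ∪ R₂ → (∀ x ∈ R₁, ∀ y ∈ R₂, B x y = 0) →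
    R₁ = ∅ ∨ R₂ = ∅)

/-- The image `R̄` of `R` in `V̄ = V/V⁰`. -/
def Rbar {V : Type*} [AddCommGroup V] [Module ℚ V]
    (B : LinearMap.BilinForm ℚ V) (R : Set V) : Set (V ⧸ LinearMap.ker B) :=
  (LinearMap.ker B).mkQ '' R

/-- `R̄^red = {ᾱ ∈ R̄ : ᾱ/2 ∉ R̄}` (which equals `R̄` when `R̄` is reduced). -/
def RbarRed {V : Type*} [AddCommGroup V] [Module ℚ V]
    (B : LinearMap.BilinForm ℚ V) (R : Set V) : Set (V ⧸ LinearMap.ker B) :=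
  {a ∈ Rbar B R | (2 : ℚ)⁻¹ • a ∉ Rbar B R}

/-- `Δ = {α ∈ V′ : α + s ∈ R for some s ∈ V⁰}`, where `V′ = span ℚ P` is the reflectable
subspace determined by the set `P` of representatives of a reflectable base. -/
def DeltaSet {V : Type*} [AddCommGroup V] [Module ℚ V]
    (B : LinearMap.BilinForm ℚ V) (R P : Set V) : Set V :=
  {α : V | α ∈ Submodule.span ℚ P ∧ ∃ s ∈ LinearMap.ker B, α + s ∈ R}

/-- `S_α = {s ∈ V⁰ : α + s ∈ R}`. -/
def transSet {V : Type*} [AddCommGroup V] [Module ℚ V]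
    (B : LinearMap.BilinForm ℚ V) (R : Set V) (α : V) : Set V :=
  {s : V | s ∈ LinearMap.ker B ∧ α + s ∈ R}

/-- `G`, the subgroup of `V⁰` generated by `⋃_{α ∈ Δ} S_α`. -/
def Ggrp {V : Type*} [AddCommGroup V] [Module ℚ V]
    (B : LinearMap.BilinForm ℚ V) (R P : Set V) : AddSubgroup V :=
  AddSubgroup.closure (⋃ α ∈ DeltaSet B R P, transSet B R α)


section AuxLEARS

variable {V : Type*} [AddCommGroup V] [Module ℚ V]


lemma lears_aux_disjoint (B : LinearMap.BilinForm ℚ V) (P : Set V)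
    (hinj : Set.InjOn (LinearMap.ker B).mkQ P)
    (hli : LinearIndependent ℚ
      ((↑) : ((LinearMap.ker B).mkQ '' P) → V ⧸ LinearMap.ker B)) :
    Disjoint (Submodule.span ℚ P) (LinearMap.ker B) := by
  have h1 : LinearIndependent ℚ (fun p : P => (LinearMap.ker B).mkQ p) :=
    (linearIndepOn_iff_image hinj).mpr hli
  have h2 := Submodule.range_ker_disjoint (v := fun p : P => (p : V))
    (f := (LinearMap.ker B).mkQ) h1
  rwa [Subtype.range_coe, Submodule.ker_mkQ] at h2


lemma lears_mkQ_rroot (B : LinearMap.BilinForm ℚ V)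
    (Bbar : LinearMap.BilinForm ℚ (V ⧸ LinearMap.ker B))
    (hBbar : ∀ x y : V,
      Bbar ((LinearMap.ker B).mkQ x) ((LinearMap.ker B).mkQ y) = B x y)
    (γ x : V) :
    (LinearMap.ker B).mkQ (rroot B γ x) =
      rroot Bbar ((LinearMap.ker B).mkQ γ) ((LinearMap.ker B).mkQ x) := by
  simp only [rroot, map_sub, map_smul, hBbar]

lemma lears_lift_foldr (B : LinearMap.BilinForm ℚ V) (R : Set V)
    (hA3 : ∀ α ∈ R, ∀ β ∈ R, rroot B α β ∈ R)
    (Bbar : LinearMap.BilinForm ℚ (V ⧸ LinearMap.ker B))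
    (hBbar : ∀ x y : V,
      Bbar ((LinearMap.ker B).mkQ x) ((LinearMap.ker B).mkQ y) = B x y)
    (P : Set V) (hPR : P ⊆ R)
    (l : List (V ⧸ LinearMap.ker B)) (b : V ⧸ LinearMap.ker B)
    (hl : ∀ γ ∈ l, γ ∈ (LinearMap.ker B).mkQ '' P)
    (hb : b ∈ (LinearMap.ker B).mkQ '' P) :
    ∃ β, β ∈ R ∧ β ∈ Submodule.span ℚ P ∧
      (LinearMap.ker B).mkQ β = l.foldr (rroot Bbar) b := by
  induction l with
  | nil =>
    obtain ⟨p, hp, rfl⟩ := hb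
    exact ⟨p, hPR hp, Submodule.subset_span hp, rfl⟩
  | cons c rest ih =>
    obtain ⟨β, hβR, hβs, hβq⟩ := ih (fun x hx => hl x (List.mem_cons_of_mem _ hx))
    obtain ⟨γ, hγ, rfl⟩ := hl c List.mem_cons_self
    refine ⟨rroot B γ β, hA3 γ (hPR hγ) β hβR, ?_, ?_⟩
    · exact Submodule.sub_mem _ hβs
        (Submodule.smul_mem _ _ (Submodule.subset_span hγ))
    · rw [lears_mkQ_rroot B Bbar hBbar, hβq]
      rfl

lemma lears_delta_mem (B : LinearMap.BilinForm ℚ V)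
    (R : Set V) (hR : IsLEARS B R)
    (Bbar : LinearMap.BilinForm ℚ (V ⧸ LinearMap.ker B))
    (hBbar : ∀ x y : V,
      Bbar ((LinearMap.ker B).mkQ x) ((LinearMap.ker B).mkQ y) = B x y)
    (P : Set V) (hPR : P ⊆ R)
    (hinj : Set.InjOn (LinearMap.ker B).mkQ P)
    (hli : LinearIndependent ℚ
      ((↑) : ((LinearMap.ker B).mkQ '' P) → V ⧸ LinearMap.ker B))
    (hreflbase : ∀ a ∈ RbarRed B R,
      ∃ (l : List (V ⧸ LinearMap.ker B)) (b : V ⧸ LinearMap.ker B),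
        (∀ γ ∈ l, γ ∈ (LinearMap.ker B).mkQ '' P) ∧
        b ∈ (LinearMap.ker B).mkQ '' P ∧
        a = l.foldr (rroot Bbar) b) :
    ∀ α ∈ DeltaSet B R P, α ∈ R ∨ (2:ℚ)⁻¹ • α ∈ R := by
  intro α hα
  obtain ⟨hαs, s, hs, hαsR⟩ := hα
  have hdis := lears_aux_disjoint B P hinj hli
  have hQs : (LinearMap.ker B).mkQ s = 0 := by
    rwa [Submodule.mkQ_apply, Submodule.Quotient.mk_eq_zero]
  have hQα : (LinearMap.ker B).mkQ (α + s) = (LinearMap.ker B).mkQ α := by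
    rw [map_add, hQs, add_zero]
  have haR : (LinearMap.ker B).mkQ α ∈ Rbar B R := ⟨α + s, hαsR, hQα⟩
  -- helper to conclude equality from equal images in the quotient, both in span P
  have hsame : ∀ x y : V, x ∈ Submodule.span ℚ P → y ∈ Submodule.span ℚ P →
      (LinearMap.ker B).mkQ x = (LinearMap.ker B).mkQ y → x = y := by
    intro x y hx hy hxy
    have h1 : x - y ∈ Submodule.span ℚ P := Submodule.sub_mem _ hx hy
    have h2 : x - y ∈ LinearMap.ker B := by
      rw [← Submodule.Quotient.mk_eq_zero, ← Submodule.mkQ_apply, map_sub, hxy, sub_self]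
    have := hdis.le_bot (Submodule.mem_inf.2 ⟨h1, h2⟩)
    rw [Submodule.mem_bot] at this
    exact sub_eq_zero.1 this
  by_cases hred : (LinearMap.ker B).mkQ α ∈ RbarRed B R
  · left
    obtain ⟨l, b, hl, hb, hfold⟩ := hreflbase _ hred
    obtain ⟨β, hβR, hβs, hβq⟩ := lears_lift_foldr B R hR.2.2.2.1 Bbar hBbar P hPR l b hl hb
    have : β = α := hsame β α hβs hαs (by rw [hβq, ← hfold])
    rwa [this] at hβR
  · right
    have hhalf : (2:ℚ)⁻¹ • (LinearMap.ker B).mkQ α ∈ Rbar B R := by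
      by_contra h; exact hred ⟨haR, h⟩
    have hq : (2:ℚ)⁻¹ • ((2:ℚ)⁻¹ • (LinearMap.ker B).mkQ α) ∉ Rbar B R := by
      rintro ⟨δ, hδR, hδq⟩
      obtain ⟨n, hn⟩ := hR.2.2.1 δ hδR (α + s) hαsR
      have hc : B (α + s) (α + s) ≠ 0 := hR.1 _ hαsR
      have hBδ : B δ (α + s) = (2:ℚ)⁻¹ * (2:ℚ)⁻¹ * B (α + s) (α + s) := by
        rw [← hBbar δ (α + s), hδq, hQα, ← hBbar (α + s) (α + s), hQα]
        rw [map_smul, map_smul, LinearMap.smul_apply, LinearMap.smul_apply,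
          smul_eq_mul, smul_eq_mul]
        ring
      rw [hBδ] at hn
      have : (n : ℚ) = 1/2 := by
        rw [← hn, div_eq_iff hc]; ring
      have h2 : ((2 * n : ℤ) : ℚ) = ((1 : ℤ) : ℚ) := by push_cast; linarith
      have := Int.cast_injective h2
      omega
    have hred2 : (2:ℚ)⁻¹ • (LinearMap.ker B).mkQ α ∈ RbarRed B R := ⟨hhalf, hq⟩
    obtain ⟨l, b, hl, hb, hfold⟩ := hreflbase _ hred2
    obtain ⟨β, hβR, hβs, hβq⟩ := lears_lift_foldr B R hR.2.2.2.1 Bbar hBbar P hPR l b hl hb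
    have hhalfmem : (2:ℚ)⁻¹ • α ∈ Submodule.span ℚ P := Submodule.smul_mem _ _ hαs
    have : β = (2:ℚ)⁻¹ • α := by
      refine hsame β _ hβs hhalfmem ?_
      rw [hβq, ← hfold, map_smul]
    rwa [this] at hβR

end AuxLEARS
/-- `⟨R⟩` is the internal direct sum of `⟨Δ⟩` and `G`; in particular `⟨R⟩ ∩ V⁰ = G`. -/
theorem closure_eq_internal_direct_sum
    {V : Type*} [AddCommGroup V] [Module ℚ V]
    (B : LinearMap.BilinForm ℚ V)
    (hsym : ∀ x y : V, B x y = B y x)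
    (hpos : ∀ x : V, 0 ≤ B x x)
    (R : Set V) (hR : IsLEARS B R)
    (Bbar : LinearMap.BilinForm ℚ (V ⧸ LinearMap.ker B))
    (hBbar : ∀ x y : V,
      Bbar ((LinearMap.ker B).mkQ x) ((LinearMap.ker B).mkQ y) = B x y)
    (P : Set V) (hPR : P ⊆ R)
    (hinj : Set.InjOn (LinearMap.ker B).mkQ P)
    (hPred : (LinearMap.ker B).mkQ '' P ⊆ RbarRed B R)
    (hli : LinearIndependent ℚ
      ((↑) : ((LinearMap.ker B).mkQ '' P) → V ⧸ LinearMap.ker B))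
    (hspan : Submodule.span ℚ ((LinearMap.ker B).mkQ '' P) = ⊤)
    (hreflbase : ∀ a ∈ RbarRed B R,
      ∃ (l : List (V ⧸ LinearMap.ker B)) (b : V ⧸ LinearMap.ker B),
        (∀ γ ∈ l, γ ∈ (LinearMap.ker B).mkQ '' P) ∧
        b ∈ (LinearMap.ker B).mkQ '' P ∧
        a = l.foldr (rroot Bbar) b)
    :
    (∀ x ∈ AddSubgroup.closure R,
      ∃ d ∈ AddSubgroup.closure (DeltaSet B R P), ∃ g ∈ Ggrp B R P, x = d + g) ∧
    (∀ d ∈ AddSubgroup.closure (DeltaSet B R P),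
      ∀ d' ∈ AddSubgroup.closure (DeltaSet B R P),
      ∀ g ∈ Ggrp B R P, ∀ g' ∈ Ggrp B R P,
        d + g = d' + g' → d = d' ∧ g = g') ∧
    AddSubgroup.closure R ⊓ (LinearMap.ker B).toAddSubgroup = Ggrp B R P := by
  have hdis : Disjoint (Submodule.span ℚ P) (LinearMap.ker B) :=
    lears_aux_disjoint B P hinj hli
  -- `V = span P + ker B`
  have hsup : Submodule.span ℚ P ⊔ LinearMap.ker B = ⊤ := by
    have h1 : Submodule.map (LinearMap.ker B).mkQ (Submodule.span ℚ P) = ⊤ := by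
      rw [Submodule.map_span, hspan]
    have h2 := Submodule.comap_map_eq (LinearMap.ker B).mkQ (Submodule.span ℚ P)
    rw [h1, Submodule.comap_top, Submodule.ker_mkQ] at h2
    exact h2.symm
  -- decomposition of roots
  have hRdec : ∀ γ ∈ R, ∃ α ∈ DeltaSet B R P, ∃ s ∈ transSet B R α, γ = α + s := by
    intro γ hγ
    have hγtop : γ ∈ Submodule.span ℚ P ⊔ LinearMap.ker B := by
      rw [hsup]; exact Submodule.mem_top
    obtain ⟨a, ha, s, hs, hsum⟩ := Submodule.mem_sup.1 hγtop
    exact ⟨a, ⟨ha, s, hs, by rwa [hsum]⟩, s, ⟨hs, by rwa [hsum]⟩, hsum.symm⟩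
  have hGdef : ∀ α ∈ DeltaSet B R P, ∀ s ∈ transSet B R α, s ∈ Ggrp B R P :=
    fun α hα s hs => AddSubgroup.subset_closure (Set.mem_biUnion hα hs)
  -- Part 1
  have hle : AddSubgroup.closure R ≤
      AddSubgroup.closure (DeltaSet B R P) ⊔ Ggrp B R P := by
    rw [AddSubgroup.closure_le]
    intro γ hγ
    obtain ⟨α, hα, s, hs, rfl⟩ := hRdec γ hγ
    exact AddSubgroup.mem_sup.2 ⟨α, AddSubgroup.subset_closure hα, s, hGdef α hα s hs, rfl⟩
  have part1 : ∀ x ∈ AddSubgroup.closure R,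
      ∃ d ∈ AddSubgroup.closure (DeltaSet B R P), ∃ g ∈ Ggrp B R P, x = d + g := by
    intro x hx
    obtain ⟨d, hd, g, hg, h⟩ := AddSubgroup.mem_sup.1 (hle hx)
    exact ⟨d, hd, g, hg, h.symm⟩
  -- closure Δ lives in span P, G lives in ker B
  have hΔle : AddSubgroup.closure (DeltaSet B R P) ≤
      (Submodule.span ℚ P).toAddSubgroup :=
    AddSubgroup.closure_le _ |>.2 (fun a ha => ha.1)
  have hGle : Ggrp B R P ≤ (LinearMap.ker B).toAddSubgroup := by
    refine AddSubgroup.closure_le _ |>.2 ?_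
    intro s hs
    simp only [Set.mem_iUnion] at hs
    obtain ⟨α, hα, hsα⟩ := hs
    exact hsα.1
  -- Part 2
  have part2 : ∀ d ∈ AddSubgroup.closure (DeltaSet B R P),
      ∀ d' ∈ AddSubgroup.closure (DeltaSet B R P),
      ∀ g ∈ Ggrp B R P, ∀ g' ∈ Ggrp B R P,
        d + g = d' + g' → d = d' ∧ g = g' := by
    intro d hd d' hd' g hg g' hg' heq
    have h1 : d - d' ∈ Submodule.span ℚ P :=
      Submodule.sub_mem _ (hΔle hd) (hΔle hd')
    have h2 : d - d' ∈ LinearMap.ker B := by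
      have : d - d' = g' - g := by
        rw [sub_eq_sub_iff_add_eq_add, heq, add_comm]
      rw [this]
      exact Submodule.sub_mem _ (hGle hg') (hGle hg)
    have h0 := hdis.le_bot (Submodule.mem_inf.2 ⟨h1, h2⟩)
    rw [Submodule.mem_bot] at h0
    have hdd : d = d' := sub_eq_zero.1 h0
    refine ⟨hdd, ?_⟩
    rw [hdd] at heq
    exact add_left_cancel heq
  -- the key lemma: G ≤ ⟨R⟩
  have hdm := lears_delta_mem B R hR Bbar hBbar P hPR hinj hli hreflbase
  have hGR : Ggrp B R P ≤ AddSubgroup.closure R := by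
    refine AddSubgroup.closure_le _ |>.2 ?_
    intro s hs
    simp only [Set.mem_iUnion] at hs
    obtain ⟨α, hα, hsk, hαsR⟩ := hs
    have hs0 : B s = 0 := hsk
    have hBs : ∀ x : V, B x s = 0 := fun x => by
      rw [hsym x s, hs0]; rfl
    rcases hdm α hα with hαR | hβR
    · have : s = (α + s) - α := by abel
      rw [this]
      exact AddSubgroup.sub_mem _ (AddSubgroup.subset_closure hαsR)
        (AddSubgroup.subset_closure hαR)
    · set β := (2:ℚ)⁻¹ • α with hβ
      have hαβ : α = (2:ℚ) • β := by
        rw [hβ, smul_smul]; norm_num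
      have hββ : B β β ≠ 0 := hR.1 β hβR
      -- B β (α + s) = 2 * B β β
      have e1 : B β (α + s) = 2 * B β β := by
        rw [hαβ, map_add, map_smul, hBs β]
        simp [smul_eq_mul]
      -- B (α+s) (α+s) = 4 * B β β
      have e2 : B (α + s) (α + s) = 4 * B β β := by
        rw [hαβ]
        simp only [map_add, map_smul, LinearMap.add_apply, LinearMap.smul_apply,
          smul_eq_mul, hBs, hs0, LinearMap.zero_apply]
        ring
      have key1 : rroot B (α + s) β = -β - s := by
        unfold rroot
        rw [e1, e2]
        have hc : 2 * (2 * B β β) / (4 * B β β) = 1 := by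
          rw [div_eq_iff (by intro h; apply hββ; linarith)]; ring
        rw [hc, one_smul, hαβ]
        module
      have key2 : rroot B β β = -β := by
        unfold rroot
        have hc : 2 * B β β / B β β = 2 := by
          rw [mul_div_assoc, div_self hββ, mul_one]
        rw [hc, two_smul]
        abel
      have hm1 : -β - s ∈ R := key1 ▸ hR.2.2.2.1 (α + s) hαsR β hβR
      have hm2 : -β ∈ R := key2 ▸ hR.2.2.2.1 β hβR β hβR
      have : s = (-β) - (-β - s) := by abel
      rw [this]
      exact AddSubgroup.sub_mem _ (AddSubgroup.subset_closure hm2)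
        (AddSubgroup.subset_closure hm1)
  -- Part 3
  refine ⟨part1, part2, le_antisymm ?_ (le_inf hGR hGle)⟩
  intro x hx
  obtain ⟨hx1, hx2⟩ := hx
  obtain ⟨d, hd, g, hg, rfl⟩ := part1 x hx1
  have h1 : d ∈ Submodule.span ℚ P := hΔle hd
  have h2 : d ∈ LinearMap.ker B := by
    have : d = (d + g) - g := by abel
    rw [this]
    exact Submodule.sub_mem _ hx2 (hGle hg)
  have h0 := hdis.le_bot (Submodule.mem_inf.2 ⟨h1, h2⟩)
  rw [Submodule.mem_bot] at h0
  rw [h0, zero_add]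
  exact hg
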